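/- Let G be a vertex-minimal non-(1_1,...,1_a,0_1,...,0_b)-colorable graph, v a vertex of G, and c a coloring of G−v (a partition of V(G)−v into b independent sets with colors 0_1,...,0_b and a sets of maximum degree ≤ 1 with colors 1_1,...,1_a). If S is the set of neighbors of v whose color appears exactly once among N(v), then every vertex of S is saturated, where a vertex is saturated if it has a 0-color, or it has a 1-color and a neighbor of the same 1-color. -/

import Mathlib

/-- `G` is `(1_1,…,1_a,0_1,…,0_b)`-colorable: `a + b` colors, the first `a` classes induce
subgraphs of maximum degree at most `1`, the last `b` classes are independent sets. -/
def DColorable {V : Type*} (G : SimpleGraph V) (a b : ℕ) : Prop :=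
  ∃ f : V → Fin (a + b),
    (∀ v, (f v : ℕ) < a → {w | G.Adj v w ∧ f w = f v}.Subsingleton) ∧
    (∀ v, a ≤ (f v : ℕ) → ∀ w, G.Adj v w → f w ≠ f v)

/-- `f` is a coloring of `G - v`: on vertices other than `v`, the first `a` (type-1) color
classes induce subgraphs of maximum degree at most `1` and the last `b` (type-0) color
classes are independent sets. -/
def PartialColoring {V : Type*} (G : SimpleGraph V) (a b : ℕ) (v : V)
    (f : V → Fin (a + b)) : Prop :=
  (∀ u, u ≠ v → (f u : ℕ) < a →
    {w | w ≠ v ∧ G.Adj u w ∧ f w = f u}.Subsingleton) ∧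
  (∀ u, u ≠ v → a ≤ (f u : ℕ) → ∀ w, w ≠ v → G.Adj u w → f w ≠ f u)

/-- In a coloring of `G - v`, a vertex `u` is saturated if it has a type-0 color
(index `≥ a`), or it has a type-1 color shared with one of its neighbors in `G - v`. -/
def Saturated {V : Type*} (G : SimpleGraph V) (a b : ℕ) (v : V)
    (f : V → Fin (a + b)) (u : V) : Prop :=
  a ≤ (f u : ℕ) ∨ ((f u : ℕ) < a ∧ ∃ w, w ≠ v ∧ G.Adj u w ∧ f w = f u)

/-- In a coloring of `G - v`, a vertex `u` is 1-saturated if it has a type-1 color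
(index `< a`) shared with one of its neighbors in `G - v`. -/
def OneSaturated {V : Type*} (G : SimpleGraph V) (a b : ℕ) (v : V)
    (f : V → Fin (a + b)) (u : V) : Prop :=
  (f u : ℕ) < a ∧ ∃ w, w ≠ v ∧ G.Adj u w ∧ f w = f u

/-- The color of the neighbor `u` of `v` appears exactly once among the neighbors of `v`. -/
def UniqueColor {V : Type*} (G : SimpleGraph V) {n : ℕ} (v : V)
    (f : V → Fin n) (u : V) : Prop :=
  ∀ w, G.Adj v w → f w = f u → w = u

/-- In a coloring `f` of `G - v` (with `G` vertex-minimal non-colorable), every neighbor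
of `v` whose color appears exactly once among the neighbors of `v` is saturated. -/
theorem stmt3 {V : Type*} [Fintype V] (G : SimpleGraph V) [DecidableRel G.Adj]
    (a b : ℕ) (ha : 1 ≤ a)
    (hnc : ¬ DColorable G a b)
    (hmin : ∀ x : V, DColorable (G.induce {x}ᶜ) a b)
    (v : V) (f : V → Fin (a + b)) (hf : PartialColoring G a b v f) :
    ∀ u, G.Adj v u → UniqueColor G v f u → Saturated G a b v f u := by
  classical
  intro u hadj huniq
  by_contra hns
  rw [Saturated] at hns
  push_neg at hns
  obtain ⟨hlt, hno⟩ := hns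
  have hno := hno hlt
  exact hnc <| by
    set g : V → Fin (a + b) := fun x => if x = v then f u else f x with hg
    have hgv : g v = f u := if_pos rfl
    have hgne : ∀ x, x ≠ v → g x = f x := fun x hx => if_neg hx
    refine ⟨g, ?_, ?_⟩
    · intro x hx
      by_cases hxv : x = v
      · intro w1 hw1 w2 hw2
        simp only [Set.mem_setOf_eq, hxv] at hw1 hw2
        have h1 : w1 ≠ v := fun h => G.loopless.irrefl v (h ▸ hw1.1)
        have h2 : w2 ≠ v := fun h => G.loopless.irrefl v (h ▸ hw2.1)
        rw [hgne w1 h1, hgv] at hw1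
        rw [hgne w2 h2, hgv] at hw2
        rw [huniq w1 hw1.1 hw1.2, huniq w2 hw2.1 hw2.2]
      · rw [hgne x hxv] at hx
        by_cases hxu : x = u
        · subst hxu
          intro w1 hw1 w2 hw2
          simp only [Set.mem_setOf_eq, hgne x hxv] at hw1 hw2
          have key : ∀ w, G.Adj x w → g w = f x → w = v := by
            intro w hw hcol
            by_contra hwv
            rw [hgne w hwv] at hcol
            exact hno w hwv hw hcol
          rw [key w1 hw1.1 hw1.2, key w2 hw2.1 hw2.2]
        · intro w1 hw1 w2 hw2
          simp only [Set.mem_setOf_eq, hgne x hxv] at hw1 hw2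
          have key : ∀ w, G.Adj x w → g w = f x →
              w ≠ v ∧ G.Adj x w ∧ f w = f x := by
            intro w hw hcol
            by_cases hwv : w = v
            · rw [hwv, hgv] at hcol
              exact absurd (huniq x (G.symm.symm _ _ (hwv ▸ hw)) hcol.symm) hxu
            · rw [hgne w hwv] at hcol
              exact ⟨hwv, hw, hcol⟩
          exact hf.1 x hxv hx (key w1 hw1.1 hw1.2) (key w2 hw2.1 hw2.2)
    · intro x hx w hw hcol
      by_cases hxv : x = v
      · rw [hxv, hgv] at hx
        omega
      · rw [hgne x hxv] at hx hcol
        by_cases hwv : w = v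
        · rw [hwv, hgv] at hcol
          rw [Fin.ext_iff] at hcol
          omega
        · rw [hgne w hwv] at hcol
          exact hf.2 x hxv hx w hwv hw hcol
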